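/- Let (Ω, μ) be a σ-finite measure space, p ∈ [1, ∞), and let T be a positive integral operator on L^p(Ω, μ) with measurable kernel k : Ω × Ω → [0, ∞), i.e., (Tf)(ω) = ∫ k(ω, ω') f(ω') dμ(ω') for a.e. ω. Assume that for every measurable set M ⊆ Ω of nonzero measure, ∫_{M × M} k d(μ ⊗ μ) > 0. Then for every f ∈ L^p with f ≥ 0, the support of Tf contains the support of f up to a null set; that is, μ({ω : f(ω) > 0} \ {ω : (Tf)(ω) > 0}) = 0. -/

import Mathlib

open MeasureTheory
open scoped ENNReal

/-- If a positive kernel operator `T` on `L^p(μ)` has a kernel `k` whose integral over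
`M × M` is strictly positive for every set `M` of nonzero measure, then for every
`0 ≤ f ∈ L^p` the support of `T f` contains the support of `f` up to a null set. -/
theorem kernel_operator_increases_support
    {Ω : Type*} [MeasurableSpace Ω] (μ : Measure Ω) [SigmaFinite μ]
    (p : ℝ≥0∞) (hp1 : 1 ≤ p) (hp2 : p ≠ ⊤)
    (k : Ω → Ω → ℝ) (hk : Measurable (Function.uncurry k)) (hk0 : ∀ x y, 0 ≤ k x y)
    (hkpos : ∀ M : Set Ω, MeasurableSet M → μ M ≠ 0 →
      0 < ∫⁻ z in M ×ˢ M, ENNReal.ofReal (k z.1 z.2) ∂(μ.prod μ))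
    (f : Ω → ℝ) (hf : MemLp f p μ) (hf0 : 0 ≤ f)
    (hfi : ∀ᵐ ω ∂μ, Integrable (fun ω' => k ω ω' * f ω') μ) :
    μ ({ω | 0 < f ω} \ {ω | 0 < ∫ ω', k ω ω' * f ω' ∂μ}) = 0 := by
  -- replace `f` by a measurable representative `g`
  obtain ⟨g, hgsm, feq⟩ := hf.aestronglyMeasurable
  have hgmeas : Measurable g := hgsm.measurable
  have hg0 : ∀ᵐ ω ∂μ, 0 ≤ g ω := feq.mono fun ω h => h ▸ hf0 ω
  set φ : Ω → ℝ := fun ω => ∫ ω', k ω ω' * g ω' ∂μ with hφdef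
  have hkg : Measurable (fun z : Ω × Ω => k z.1 z.2 * g z.2) :=
    hk.mul (hgmeas.comp measurable_snd)
  have hφ : Measurable φ := hkg.stronglyMeasurable.integral_prod_right'.measurable
  have heq : ∀ ω, (∫ ω', k ω ω' * f ω' ∂μ) = φ ω := fun ω =>
    integral_congr_ae (feq.mono fun ω' h => by simp only [h])
  have hfi' : ∀ᵐ ω ∂μ, Integrable (fun ω' => k ω ω' * g ω') μ := by
    filter_upwards [hfi] with ω h
    exact h.congr (feq.mono fun ω' hω' => by simp only [hω'])
  set M : Set Ω := {ω | 0 < g ω ∧ ¬ 0 < φ ω} with hMdef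
  have hM : MeasurableSet M :=
    (measurableSet_lt measurable_const hgmeas).inter
      (measurableSet_lt measurable_const hφ).compl
  have hsetae : ({ω | 0 < f ω} \ {ω | 0 < ∫ ω', k ω ω' * f ω' ∂μ}) =ᵐ[μ] M := by
    filter_upwards [feq] with ω hω
    show (ω ∈ ({ω | 0 < f ω} \ {ω | 0 < ∫ ω', k ω ω' * f ω' ∂μ})) = (ω ∈ M)
    simp only [Set.mem_diff, Set.mem_setOf_eq, hMdef, hω, heq ω, eq_iff_iff]
  rw [show μ ({ω | 0 < f ω} \ {ω | 0 < ∫ ω', k ω ω' * f ω' ∂μ}) = μ M from measure_congr hsetae]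
  by_contra hMne
  have hpos := hkpos M hM hMne
  have hzero : ∫⁻ z in M ×ˢ M, ENNReal.ofReal (k z.1 z.2) ∂(μ.prod μ) = 0 := by
    rw [← Measure.prod_restrict,
      lintegral_prod (fun z : Ω × Ω => ENNReal.ofReal (k z.1 z.2))
        (by exact hk.ennreal_ofReal.aemeasurable)]
    have houter : ∀ᵐ ω ∂μ.restrict M,
        (∫⁻ ω', ENNReal.ofReal (k ω ω') ∂μ.restrict M) = 0 := by
      filter_upwards [ae_restrict_mem hM, ae_restrict_of_ae hfi'] with ω hωM hInt
      have hnonneg : ∀ᵐ ω' ∂μ, 0 ≤ k ω ω' * g ω' :=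
        hg0.mono fun ω' h => mul_nonneg (hk0 ω ω') h
      have h0 : φ ω = 0 :=
        le_antisymm (not_lt.1 hωM.2) (integral_nonneg_of_ae hnonneg)
      have hz : (fun ω' => k ω ω' * g ω') =ᵐ[μ] 0 :=
        (integral_eq_zero_iff_of_nonneg_ae hnonneg hInt).1 h0
      have : ∀ᵐ ω' ∂μ.restrict M, ENNReal.ofReal (k ω ω') = 0 := by
        filter_upwards [ae_restrict_mem hM, ae_restrict_of_ae hz] with ω' h1 h2
        have hk00 : k ω ω' = 0 := by
          rcases mul_eq_zero.1 h2 with h | h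
          · exact h
          · exact absurd h (ne_of_gt h1.1)
        simp [hk00]
      rw [lintegral_congr_ae this, lintegral_zero]
    rw [lintegral_congr_ae houter, lintegral_zero]
  exact absurd hzero (ne_of_gt hpos)
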